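/- Substituting the gamma-process Laplace exponent into the general EPPF formula recovers the CRP EPPF: ((-1)^{N-K}/(N-1)!) ∫_0^∞ λ^{N-1} e^{-Φ(λ)} ∏_{k=1}^K Φ^{(N_k)}(λ) dλ = θ^{K-1} (∏_k (N_k-1)!) / ∏_{m=1}^{N-1}(θ+m), where Φ(λ) = θ log((λ+ζ)/ζ). -/

import Mathlib

open Finset

open MeasureTheory Filter Set


lemma cont_aux {ζ : ℝ} (c : ℝ) (hζ : 0 < ζ) (n : ℕ) :
    ContinuousOn (fun l : ℝ => l ^ n * (l + ζ) ^ c) (Set.Ici 0) := by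
  apply continuousOn_of_forall_continuousAt
  intro l hl
  have : (0:ℝ) ≤ l := hl
  exact (continuousAt_pow l n).mul
    ((continuousAt_id.add continuousAt_const).rpow_const (Or.inl (by dsimp; nlinarith)))

lemma integ_aux {θ ζ : ℝ} (hθ : 0 < θ) (hζ : 0 < ζ) (n : ℕ) :
    IntegrableOn (fun l : ℝ => l ^ n * (l + ζ) ^ (-(θ + n + 1))) (Set.Ioi 0) := by
  have hmeas : AEStronglyMeasurable (fun l : ℝ => l ^ n * (l + ζ) ^ (-(θ + n + 1)))
      (volume.restrict (Set.Ioi 0)) :=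
    ((cont_aux _ hζ n).mono Ioi_subset_Ici_self).aestronglyMeasurable measurableSet_Ioi
  have key : ∀ l ∈ Set.Ioi (0:ℝ),
      ‖l ^ n * (l + ζ) ^ (-(θ + n + 1))‖ ≤ (l + ζ) ^ (-(θ + 1)) := by
    intro l hl
    have hl0 : (0:ℝ) < l := hl
    have hlζ : (0:ℝ) < l + ζ := by linarith
    rw [Real.norm_eq_abs, abs_of_nonneg (by positivity)]
    have h1 : l ^ n ≤ (l + ζ) ^ n := pow_le_pow_left₀ hl0.le (by linarith) n
    calc l ^ n * (l + ζ) ^ (-(θ + n + 1))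
        ≤ (l + ζ) ^ n * (l + ζ) ^ (-(θ + n + 1)) :=
          mul_le_mul_of_nonneg_right h1 (by positivity)
      _ = (l + ζ) ^ (-(θ + 1)) := by
          rw [← Real.rpow_natCast (l+ζ) n, ← Real.rpow_add hlζ]
          ring_nf
  rw [show Set.Ioi (0:ℝ) = Set.Ioc 0 1 ∪ Set.Ioi 1 by rw [Ioc_union_Ioi_eq_Ioi]; norm_num]
  apply IntegrableOn.union
  · apply Integrable.mono' (g := fun _ : ℝ => ζ ^ (-(θ + 1)))
      (integrableOn_const measure_Ioc_lt_top.ne)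
    · exact hmeas.mono_set (fun x hx => Set.Ioc_subset_Ioi_self hx)
    · filter_upwards [ae_restrict_mem measurableSet_Ioc] with l hl
      refine (key l hl.1).trans ?_
      exact Real.rpow_le_rpow_of_nonpos hζ (by linarith [hl.1.le]) (by linarith)
  · apply Integrable.mono' (g := fun l : ℝ => l ^ (-(θ + 1)))
      (integrableOn_Ioi_rpow_of_lt (by linarith) one_pos)
    · exact hmeas.mono_set (Set.Ioi_subset_Ioi zero_le_one)
    · filter_upwards [ae_restrict_mem measurableSet_Ioi] with l hl
      have hl1 : (1:ℝ) < l := hl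
      refine (key l (lt_trans one_pos hl1)).trans ?_
      exact Real.rpow_le_rpow_of_nonpos (by linarith) (by linarith) (by linarith)

lemma tendsto_rzero {θ ζ : ℝ} (hθ : 0 < θ) (hζ : 0 < ζ) :
    Tendsto (fun l : ℝ => (l + ζ) ^ (-θ)) atTop (nhds 0) :=
  (tendsto_rpow_neg_atTop hθ).comp (tendsto_atTop_add_const_right atTop ζ tendsto_id)

lemma tendsto_bdry {θ ζ : ℝ} (hθ : 0 < θ) (hζ : 0 < ζ) (n : ℕ) :
    Tendsto (fun l : ℝ => l ^ (n+1) * (l + ζ) ^ (-(θ + n + 1))) atTop (nhds 0) := by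
  apply tendsto_of_tendsto_of_tendsto_of_le_of_le' tendsto_const_nhds (tendsto_rzero hθ hζ)
  · filter_upwards [eventually_gt_atTop (0:ℝ)] with l hl
    positivity
  · filter_upwards [eventually_gt_atTop (0:ℝ)] with l hl
    have hlζ : (0:ℝ) < l + ζ := by linarith
    have h1 : l ^ (n+1) ≤ (l + ζ) ^ (n+1) := pow_le_pow_left₀ hl.le (by linarith) _
    calc l ^ (n+1) * (l + ζ) ^ (-(θ + n + 1))
        ≤ (l + ζ) ^ (n+1) * (l + ζ) ^ (-(θ + n + 1)) :=
          mul_le_mul_of_nonneg_right h1 (by positivity)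
      _ = (l + ζ) ^ (-θ) := by
          rw [← Real.rpow_natCast (l+ζ) (n+1), ← Real.rpow_add hlζ]
          push_cast; ring_nf

lemma deriv_prod {θ ζ : ℝ} (hζ : 0 < ζ) (n : ℕ) {l : ℝ} (hl : 0 ≤ l) :
    HasDerivAt (fun l : ℝ => l ^ (n+1) * (l + ζ) ^ (-(θ + n + 1)))
      ((n+1) * (l ^ n * (l + ζ) ^ (-(θ + n + 1)))
        - (θ + n + 1) * (l ^ (n+1) * (l + ζ) ^ (-(θ + (n+1) + 1)))) l := by
  have hlζ : l + ζ ≠ 0 := by positivity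
  have h1 : HasDerivAt (fun l : ℝ => l ^ (n+1)) ((n+1) * l ^ n) l := by
    simpa using hasDerivAt_pow (n+1) l
  have h2 : HasDerivAt (fun l : ℝ => (l + ζ) ^ (-(θ + n + 1)))
      (1 * (-(θ + n + 1)) * (l + ζ) ^ (-(θ + n + 1) - 1)) l :=
    ((hasDerivAt_id l).add_const ζ).rpow_const (Or.inl hlζ)
  refine (h1.mul h2).congr_deriv ?_
  rw [show -(θ + n + 1) - 1 = -(θ + (n+1) + 1) by push_cast; ring]
  ring

lemma J_rec {θ ζ : ℝ} (hθ : 0 < θ) (hζ : 0 < ζ) (n : ℕ) :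
    (∫ l in Set.Ioi (0:ℝ), l ^ (n+1) * (l + ζ) ^ (-(θ + (n+1) + 1)))
      = (n+1) / (θ + n + 1) * ∫ l in Set.Ioi (0:ℝ), l ^ n * (l + ζ) ^ (-(θ + n + 1)) := by
  have hi1 := integ_aux hθ hζ n
  have hi2 : IntegrableOn
      (fun l : ℝ => l ^ (n+1) * (l + ζ) ^ (-(θ + ((n:ℝ)+1) + 1))) (Set.Ioi 0) := by
    have := integ_aux hθ hζ (n+1)
    push_cast at this
    exact this
  have hint := integral_Ioi_of_hasDerivAt_of_tendsto'
      (f := fun l : ℝ => l ^ (n+1) * (l + ζ) ^ (-(θ + n + 1)))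
      (fun x (hx : x ∈ Set.Ici (0:ℝ)) => deriv_prod hζ n hx)
      (((hi1.const_mul ((n:ℝ)+1)).sub (hi2.const_mul (θ + n + 1))))
      (tendsto_bdry hθ hζ n)
  rw [integral_sub (hi1.const_mul _) (hi2.const_mul _), integral_const_mul,
    integral_const_mul] at hint
  simp only [zero_pow (Nat.succ_ne_zero n), zero_mul, sub_zero] at hint
  have hpos : (0:ℝ) < θ + n + 1 := by positivity
  rw [div_mul_eq_mul_div, eq_div_iff hpos.ne']
  linarith [hint]

lemma J_zero {θ ζ : ℝ} (hθ : 0 < θ) (hζ : 0 < ζ) :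
    (∫ l in Set.Ioi (0:ℝ), l ^ 0 * (l + ζ) ^ (-(θ + 0 + 1))) = ζ ^ (-θ) / θ := by
  have hder : ∀ x ∈ Set.Ici (0:ℝ), HasDerivAt (fun l : ℝ => -(l + ζ) ^ (-θ) / θ)
      (x ^ 0 * (x + ζ) ^ (-(θ + 0 + 1))) x := by
    intro x hx
    have hxζ : x + ζ ≠ 0 := by have : (0:ℝ) ≤ x := hx; positivity
    have h2 : HasDerivAt (fun l : ℝ => (l + ζ) ^ (-θ))
        (1 * (-θ) * (x + ζ) ^ (-θ - 1)) x :=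
      ((hasDerivAt_id x).add_const ζ).rpow_const (Or.inl hxζ)
    have := (h2.neg).div_const θ
    refine this.congr_deriv ?_
    rw [show -θ - 1 = -(θ + 0 + 1) by push_cast; ring]
    field_simp
  have htend : Tendsto (fun l : ℝ => -(l + ζ) ^ (-θ) / θ) atTop (nhds 0) := by
    have := (tendsto_rzero hθ hζ).neg.div_const θ
    simpa using this
  have hi0 : IntegrableOn (fun x : ℝ => x ^ 0 * (x + ζ) ^ (-(θ + 0 + 1))) (Set.Ioi 0) := by
    simpa using integ_aux hθ hζ 0
  have hint := integral_Ioi_of_hasDerivAt_of_tendsto' hder hi0 htend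
  rw [hint, zero_add]
  ring

lemma iter_deriv {θ ζ : ℝ} (hθ : 0 < θ) (hζ : 0 < ζ)
    (Φ : ℝ → ℝ) (hΦ : ∀ l, Φ l = θ * Real.log ((l + ζ) / ζ)) :
    ∀ n, 1 ≤ n → ∀ l ∈ Set.Ioi (0:ℝ),
      iteratedDeriv n Φ l = ((-1:ℝ)^(n-1) * (n-1).factorial * θ) * (l + ζ) ^ (-(n:ℤ)) := by
  intro n hn
  induction n, hn using Nat.le_induction with
  | base =>
    intro l hl
    have hl0 : (0:ℝ) < l := hl
    have hlζ : (0:ℝ) < l + ζ := by linarith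
    have h1 : HasDerivAt (fun x : ℝ => (x + ζ) / ζ) (1 / ζ) l :=
      ((hasDerivAt_id l).add_const ζ).div_const ζ
    have h2 : HasDerivAt Φ (θ * (1 / ζ / ((l + ζ) / ζ))) l := by
      have := (h1.log (by positivity)).const_mul θ
      simpa [funext hΦ] using this
    rw [iteratedDeriv_one, h2.deriv]
    have h4 : 1 / ζ / ((l + ζ) / ζ) = (l + ζ)⁻¹ := by field_simp
    rw [h4]
    norm_num
  | succ n hn ih =>
    intro l hl
    have hl0 : (0:ℝ) < l := hl
    have hlζ : (0:ℝ) < l + ζ := by linarith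
    rw [iteratedDeriv_succ]
    have hev : iteratedDeriv n Φ =ᶠ[nhds l]
        fun x => ((-1:ℝ)^(n-1) * (n-1).factorial * θ) * (x + ζ) ^ (-(n:ℤ)) := by
      filter_upwards [isOpen_Ioi.mem_nhds hl] with x hx using ih x hx
    rw [hev.deriv_eq]
    have h3 : HasDerivAt (fun x : ℝ => ((-1:ℝ)^(n-1) * (n-1).factorial * θ) * (x + ζ) ^ (-(n:ℤ)))
        (((-1:ℝ)^(n-1) * (n-1).factorial * θ) * ((-(n:ℤ)) * (l + ζ) ^ (-(n:ℤ) - 1) * 1)) l := by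
      have := ((hasDerivAt_zpow (-(n:ℤ)) (l+ζ) (Or.inl hlζ.ne')).comp l
        ((hasDerivAt_id l).add_const ζ)).const_mul ((-1:ℝ)^(n-1) * (n-1).factorial * θ)
      simpa using this
    rw [h3.deriv]
    have hcast : ((-(n:ℤ)) : ℝ) = -(n:ℝ) := by push_cast; ring
    have hfac : ((n - 1).factorial : ℝ) * n = (n.factorial : ℝ) := by
      rw [← Nat.succ_pred_eq_of_pos hn]
      push_cast [Nat.factorial_succ]
      ring
    have hpow : (-1:ℝ)^(n-1) * (-1) = (-1:ℝ)^n := by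
      rw [← pow_succ]
      congr 1
      omega
    have : (n+1) - 1 = n := rfl
    rw [this]
    rw [show -(n:ℤ) - 1 = -((n:ℤ)+1) by ring]
    push_cast
    rw [← hpow, ← hfac]
    ring

lemma J_formula {θ ζ : ℝ} (hθ : 0 < θ) (hζ : 0 < ζ) (n : ℕ) :
    (∫ l in Set.Ioi (0:ℝ), l ^ n * (l + ζ) ^ (-(θ + n + 1)))
      = n.factorial * ζ ^ (-θ) / (θ * ∏ m ∈ Finset.Icc 1 n, (θ + m)) := by
  induction n with
  | zero => simpa using J_zero hθ hζ
  | succ n ih =>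
    have hprod : (0:ℝ) < ∏ m ∈ Finset.Icc 1 n, (θ + m) := by
      apply Finset.prod_pos
      intro m hm
      positivity
    have h1 : (∫ l in Set.Ioi (0:ℝ), l ^ (n+1) * (l + ζ) ^ (-(θ + (n+1:ℕ) + 1)))
        = (∫ l in Set.Ioi (0:ℝ), l ^ (n+1) * (l + ζ) ^ (-(θ + ((n:ℝ)+1) + 1))) := by
      push_cast; rfl
    rw [h1, J_rec hθ hζ n, ih, Finset.prod_Icc_succ_top (Nat.le_add_left 1 n)]
    have hθn : (0:ℝ) < θ + n + 1 := by positivity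
    push_cast [Nat.factorial_succ]
    field_simp
    ring

/-- Substituting the gamma-process Laplace exponent `Φ(l) = θ log((l+ζ)/ζ)` into the
general subordinator EPPF formula recovers the CRP EPPF: with `N = ∑_k N_k`,
`((-1)^(N-K)/(N-1)!) ∫_0^∞ l^(N-1) e^(-Φ(l)) ∏_{k=1}^K Φ^(N_k)(l) dl
  = θ^(K-1) (∏_k (N_k-1)!) / ∏_{m=1}^{N-1}(θ+m)`. -/
theorem gamma_subordinator_eppf_eq_crp (θ ζ : ℝ) (hθ : 0 < θ) (hζ : 0 < ζ)
    (K : ℕ) (hK : 1 ≤ K) (Ns : Fin K → ℕ) (hNs : ∀ k, 1 ≤ Ns k)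
    (Φ : ℝ → ℝ) (hΦ : ∀ l, Φ l = θ * Real.log ((l + ζ) / ζ)) :
    ((-1 : ℝ) ^ ((∑ k, Ns k) - K) / (Nat.factorial ((∑ k, Ns k) - 1) : ℝ)) *
        ∫ l in Set.Ioi (0 : ℝ),
          l ^ ((∑ k, Ns k) - 1) * Real.exp (-Φ l) * ∏ k : Fin K, iteratedDeriv (Ns k) Φ l
      = θ ^ (K - 1) * (∏ k : Fin K, ((Nat.factorial (Ns k - 1) : ℕ) : ℝ)) /
          ∏ m ∈ Finset.Icc 1 ((∑ k, Ns k) - 1), (θ + (m : ℝ)) := by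
  set N := ∑ k, Ns k with hN
  have hKN : K ≤ N := by
    calc K = ∑ _k : Fin K, 1 := by simp
    _ ≤ N := Finset.sum_le_sum (fun k _ => hNs k)
  have hN1 : 1 ≤ N := le_trans hK hKN
  have hsum : ∑ k, (Ns k - 1) = N - K := by
    have h : ∑ k, ((Ns k - 1) + 1) = N :=
      Finset.sum_congr rfl fun k _ => by have := hNs k; omega
    rw [Finset.sum_add_distrib] at h
    simp only [Finset.sum_const, Finset.card_univ, Fintype.card_fin, smul_eq_mul,
      mul_one] at h
    omega
  have hcong : Set.EqOn
      (fun l => l ^ (N - 1) * Real.exp (-Φ l) * ∏ k, iteratedDeriv (Ns k) Φ l)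
      (fun l => ((-1:ℝ)^(N-K) * θ^K * ∏ k, ((Ns k - 1).factorial : ℝ)) * ζ ^ θ
            * (l ^ (N-1) * (l + ζ) ^ (-(θ + ((N-1 : ℕ) : ℝ) + 1)))) (Set.Ioi 0) := by
    intro l hl
    have hl0 : (0:ℝ) < l := hl
    have hlζ : (0:ℝ) < l + ζ := by linarith
    have hexp : Real.exp (-Φ l) = (l + ζ) ^ (-θ) * ζ ^ θ := by
      rw [hΦ, show -(θ * Real.log ((l+ζ)/ζ)) = Real.log ((l+ζ)/ζ) * (-θ) by ring,
        ← Real.rpow_def_of_pos (by positivity), Real.div_rpow hlζ.le hζ.le,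
        Real.rpow_neg hζ.le θ, div_eq_mul_inv, inv_inv]
    have hprod : ∏ k, iteratedDeriv (Ns k) Φ l
        = ((-1:ℝ)^(N-K) * θ^K * ∏ k, ((Ns k - 1).factorial:ℝ)) * ((l+ζ)^N)⁻¹ := by
      have h1 : ∀ k : Fin K, iteratedDeriv (Ns k) Φ l
          = ((-1:ℝ)^(Ns k - 1) * ((Ns k - 1).factorial:ℝ) * θ) * ((l+ζ)^(Ns k))⁻¹ := by
        intro k
        rw [iter_deriv hθ hζ Φ hΦ (Ns k) (hNs k) l hl, zpow_neg, zpow_natCast]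
      rw [Finset.prod_congr rfl (fun k _ => h1 k), Finset.prod_mul_distrib,
        Finset.prod_mul_distrib, Finset.prod_mul_distrib, Finset.prod_inv_distrib,
        Finset.prod_pow_eq_pow_sum, Finset.prod_pow_eq_pow_sum, hsum, ← hN,
        Finset.prod_const, Finset.card_univ, Fintype.card_fin]
      ring
    have hcomb : (l+ζ)^(-θ) * ((l+ζ)^N)⁻¹ = (l+ζ) ^ (-(θ + ((N-1:ℕ):ℝ) + 1)) := by
      rw [← Real.rpow_natCast (l+ζ) N, ← Real.rpow_neg hlζ.le, ← Real.rpow_add hlζ]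
      congr 1
      rw [Nat.cast_sub hN1]
      push_cast
      ring
    simp only
    rw [hexp, hprod, ← hcomb]
    ring
  rw [setIntegral_congr_fun measurableSet_Ioi hcong, integral_const_mul,
    J_formula hθ hζ (N-1)]
  have hm1 : (-1:ℝ)^(N-K) * (-1:ℝ)^(N-K) = 1 := by
    rw [← pow_add]; exact Even.neg_one_pow ⟨N-K, rfl⟩
  have hζθ : ζ ^ θ * ζ ^ (-θ) = 1 := by
    rw [← Real.rpow_add hζ]; simp
  have hθK : θ ^ K = θ ^ (K-1) * θ := by rw [← pow_succ]; congr 1; omega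
  have hfacne : ((N-1).factorial : ℝ) ≠ 0 := Nat.cast_ne_zero.2 (Nat.factorial_ne_zero _)
  have hP : (0:ℝ) < ∏ m ∈ Finset.Icc 1 (N-1), (θ + m) :=
    Finset.prod_pos fun m hm => by
      have : 1 ≤ m := (Finset.mem_Icc.1 hm).1
      positivity
  have step : ((-1:ℝ) ^ (N - K) / ((N-1).factorial : ℝ)) *
      (((-1:ℝ)^(N-K) * θ^K * ∏ k, ((Ns k - 1).factorial:ℝ)) * ζ ^ θ *
        (((N-1).factorial : ℝ) * ζ ^ (-θ) / (θ * ∏ m ∈ Finset.Icc 1 (N-1), (θ + m))))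
      = ((-1:ℝ)^(N-K) * (-1:ℝ)^(N-K)) * (ζ ^ θ * ζ ^ (-θ)) *
        (((N-1).factorial : ℝ) / ((N-1).factorial : ℝ)) * (θ^K / θ) *
        ((∏ k, ((Ns k - 1).factorial:ℝ)) / ∏ m ∈ Finset.Icc 1 (N-1), (θ + m)) := by
    ring
  rw [step, hm1, hζθ, hθK, div_self hfacne, mul_div_assoc, div_self hθ.ne', mul_one]
  ring
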